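/- Let n ≥ 2, a ≥ 1, let D ⊊ ℝⁿ be a domain, D' ⊊ ℝⁿ a c-uniform domain (c ≥ 1), and f : D → D' an (M,C)-CQH homeomorphism. Let β be a rectifiable arc in D satisfying ℓ_k(β[s₁,s₂]) ≤ 4a²·k_D(s₁,s₂) + 4a² for all s₁, s₂ ∈ β. Let p, q ∈ β with q following p, let w ∈ β[p,q] be a point with d'(f(w)) = sup{d'(f(u)) : u ∈ β}, and suppose d'(f(p)) ≥ d'(f(w))/2 and d'(f(q)) ≥ d'(f(w))/2. Then there exists a₂ > 0, depending only on a, c, M, C, such that for every z ∈ β[p,q]: (1) d'(f(w)) ≤ a₂·d'(f(z)); (2) |f(p) − f(q)| ≤ a₂·d'(f(z)); (3) max{|f(p) − f(z)|, |f(q) − f(z)|} ≤ a₂·d'(f(z)). (This is Corollary 3.9.) -/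

import Mathlib

open Set Metric MeasureTheory

noncomputable section

/-- Distance from a point to the boundary of `D`, i.e. to its complement. -/
def distBd {n : ℕ} (D : Set (EuclideanSpace ℝ (Fin n))) (z : EuclideanSpace ℝ (Fin n)) : ℝ :=
  infDist z Dᶜ

/-- A domain in ℝⁿ: a nonempty, open, connected, proper subset. -/
def IsProperDomain {n : ℕ} (D : Set (EuclideanSpace ℝ (Fin n))) : Prop :=
  IsOpen D ∧ IsConnected D ∧ D ≠ univ

/-- A rectifiable arc in `D`, parametrized by arclength on `[0, len]`:
the length of the subarc between parameters `s ≤ t` is exactly `t - s`. -/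
structure Arc (n : ℕ) (D : Set (EuclideanSpace ℝ (Fin n))) where
  len : ℝ
  len_nonneg : 0 ≤ len
  toFun : ℝ → EuclideanSpace ℝ (Fin n)
  injOn : InjOn toFun (Icc 0 len)
  mem : ∀ t ∈ Icc 0 len, toFun t ∈ D
  unitSpeed : ∀ s ∈ Icc 0 len, ∀ t ∈ Icc 0 len, s ≤ t →
    eVariationOn toFun (Icc s t) = ENNReal.ofReal (t - s)

namespace Arc

variable {n : ℕ} {D : Set (EuclideanSpace ℝ (Fin n))}

/-- The arc `γ` joins `x` to `y`. -/
def Joins (γ : Arc n D) (x y : EuclideanSpace ℝ (Fin n)) : Prop :=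
  γ.toFun 0 = x ∧ γ.toFun γ.len = y

/-- Quasihyperbolic length of the subarc of `γ` between parameters `u` and `v`:
`∫ |dz| / d(z)` along the (unit-speed) subarc. -/
def qhLen (γ : Arc n D) (u v : ℝ) : ℝ :=
  ∫ t in u..v, 1 / distBd D (γ.toFun t)

end Arc

/-- Quasihyperbolic distance in `D`. -/
def qhDist {n : ℕ} (D : Set (EuclideanSpace ℝ (Fin n))) (x y : EuclideanSpace ℝ (Fin n)) : ℝ :=
  sInf { r | ∃ γ : Arc n D, γ.Joins x y ∧ r = γ.qhLen 0 γ.len }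

/-- Inner (internal) distance in `D`: infimum of lengths of arcs joining the two points. -/
def innerDist {n : ℕ} (D : Set (EuclideanSpace ℝ (Fin n))) (x y : EuclideanSpace ℝ (Fin n)) : ℝ :=
  sInf { r | ∃ γ : Arc n D, γ.Joins x y ∧ r = γ.len }

namespace Arc

variable {n : ℕ} {D : Set (EuclideanSpace ℝ (Fin n))}

/-- `γ` is a quasihyperbolic geodesic: its quasihyperbolic length realizes the
quasihyperbolic distance between its endpoints. -/
def IsGeodesic (γ : Arc n D) : Prop :=
  γ.qhLen 0 γ.len = qhDist D (γ.toFun 0) (γ.toFun γ.len)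

/-- `γ` is a `c`-cone arc: `min (ℓ(γ[z₁,z]), ℓ(γ[z₂,z])) ≤ c·d(z)` for all `z ∈ γ`. -/
def IsConeArc (γ : Arc n D) (c : ℝ) : Prop :=
  ∀ t ∈ Icc 0 γ.len, min t (γ.len - t) ≤ c * distBd D (γ.toFun t)

end Arc

/-- `D` is an `a`-John domain. -/
def IsJohn {n : ℕ} (D : Set (EuclideanSpace ℝ (Fin n))) (a : ℝ) : Prop :=
  ∀ x ∈ D, ∀ y ∈ D, ∃ γ : Arc n D, γ.Joins x y ∧ γ.IsConeArc a

/-- `D` is a `c`-uniform domain. -/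
def IsUniform {n : ℕ} (D : Set (EuclideanSpace ℝ (Fin n))) (c : ℝ) : Prop :=
  ∀ x ∈ D, ∀ y ∈ D, ∃ γ : Arc n D, γ.Joins x y ∧ γ.IsConeArc c ∧ γ.len ≤ c * dist x y

/-- `f : D → D'` is an `(M,C)`-CQH homeomorphism (a homeomorphism of `D` onto `D'`
satisfying the coarse quasihyperbolic bi-Lipschitz condition). -/
def IsCQH {n : ℕ} (D D' : Set (EuclideanSpace ℝ (Fin n)))
    (f : EuclideanSpace ℝ (Fin n) → EuclideanSpace ℝ (Fin n)) (M C : ℝ) : Prop :=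
  ContinuousOn f D ∧ BijOn f D D' ∧
  ∀ x ∈ D, ∀ y ∈ D,
    (qhDist D x y - C) / M ≤ qhDist D' (f x) (f y) ∧
    qhDist D' (f x) (f y) ≤ M * qhDist D x y + C
section AuxLemmas

open Real

variable {n : ℕ}

lemma distBd_nonneg (D : Set (EuclideanSpace ℝ (Fin n))) (z : EuclideanSpace ℝ (Fin n)) :
    0 ≤ distBd D z := infDist_nonneg

lemma distBd_pos {D : Set (EuclideanSpace ℝ (Fin n))} (hD : IsOpen D) (hne : D ≠ univ)
    {z : EuclideanSpace ℝ (Fin n)} (hz : z ∈ D) : 0 < distBd D z := by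
  have h1 : IsClosed Dᶜ := hD.isClosed_compl
  have h2 : Dᶜ.Nonempty := nonempty_compl.2 hne
  exact (h1.notMem_iff_infDist_pos h2).1 (by simpa using hz)

lemma distBd_le_add (D : Set (EuclideanSpace ℝ (Fin n))) (x y : EuclideanSpace ℝ (Fin n)) :
    distBd D x ≤ distBd D y + dist x y := infDist_le_infDist_add_dist

namespace Arc

variable {D : Set (EuclideanSpace ℝ (Fin n))}

lemma dist_le (γ : Arc n D) {s t : ℝ} (hs : s ∈ Icc 0 γ.len) (ht : t ∈ Icc 0 γ.len)
    (hst : s ≤ t) : dist (γ.toFun s) (γ.toFun t) ≤ t - s := by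
  have h := eVariationOn.edist_le γ.toFun (left_mem_Icc.2 hst) (right_mem_Icc.2 hst)
  rw [γ.unitSpeed s hs t ht hst, edist_dist] at h
  exact (ENNReal.ofReal_le_ofReal_iff (by linarith [hs.1, ht.1, hst])).1 h

lemma continuousOn (γ : Arc n D) : ContinuousOn γ.toFun (Icc 0 γ.len) := by
  have : LipschitzOnWith 1 γ.toFun (Icc 0 γ.len) := by
    apply LipschitzOnWith.of_dist_le_mul
    intro x hx y hy
    rcases le_total x y with h | h
    · calc dist (γ.toFun x) (γ.toFun y) ≤ y - x := γ.dist_le hx hy h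
        _ ≤ 1 * dist x y := by rw [one_mul, Real.dist_eq, abs_sub_comm]; exact le_abs_self _
    · calc dist (γ.toFun x) (γ.toFun y) = dist (γ.toFun y) (γ.toFun x) := dist_comm _ _
        _ ≤ x - y := γ.dist_le hy hx h
        _ ≤ 1 * dist x y := by rw [one_mul, Real.dist_eq]; exact le_abs_self _
  exact this.continuousOn

lemma integrand_continuousOn (γ : Arc n D) (hD : IsOpen D) (hne : D ≠ univ) :
    ContinuousOn (fun t => 1 / distBd D (γ.toFun t)) (Icc 0 γ.len) := by
  have h1 : ContinuousOn (fun t => distBd D (γ.toFun t)) (Icc 0 γ.len) :=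
    (continuous_infDist_pt _).comp_continuousOn γ.continuousOn
  exact continuousOn_const.div h1 (fun t ht => (distBd_pos hD hne (γ.mem t ht)).ne')

lemma integrand_intervalIntegrable (γ : Arc n D) (hD : IsOpen D) (hne : D ≠ univ)
    {u v : ℝ} (hu : u ∈ Icc 0 γ.len) (hv : v ∈ Icc 0 γ.len) :
    IntervalIntegrable (fun t => 1 / distBd D (γ.toFun t)) volume u v := by
  apply ContinuousOn.intervalIntegrable
  apply (γ.integrand_continuousOn hD hne).mono
  exact uIcc_subset_Icc hu hv

lemma qhLen_nonneg (γ : Arc n D) {u v : ℝ} (huv : u ≤ v) : 0 ≤ γ.qhLen u v :=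
  intervalIntegral.integral_nonneg huv
    (fun t _ => one_div_nonneg.2 (distBd_nonneg D (γ.toFun t)))

lemma qhLen_add (γ : Arc n D) (hD : IsOpen D) (hne : D ≠ univ) {s u t : ℝ}
    (hs : s ∈ Icc 0 γ.len) (hu : u ∈ Icc 0 γ.len) (ht : t ∈ Icc 0 γ.len) :
    γ.qhLen s u + γ.qhLen u t = γ.qhLen s t :=
  intervalIntegral.integral_add_adjacent_intervals
    (γ.integrand_intervalIntegrable hD hne hs hu) (γ.integrand_intervalIntegrable hD hne hu ht)

end Arc

lemma qhDist_bddBelow (D : Set (EuclideanSpace ℝ (Fin n))) (x y : EuclideanSpace ℝ (Fin n)) :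
    BddBelow { r | ∃ γ : Arc n D, γ.Joins x y ∧ r = γ.qhLen 0 γ.len } := by
  refine ⟨0, ?_⟩
  rintro r ⟨γ, -, rfl⟩
  exact γ.qhLen_nonneg γ.len_nonneg

lemma qhDist_nonneg (D : Set (EuclideanSpace ℝ (Fin n))) (x y : EuclideanSpace ℝ (Fin n)) :
    0 ≤ qhDist D x y := by
  apply Real.sInf_nonneg
  rintro r ⟨γ, -, rfl⟩
  exact γ.qhLen_nonneg γ.len_nonneg

lemma qhDist_le_qhLen {D : Set (EuclideanSpace ℝ (Fin n))} (γ : Arc n D)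
    {x y : EuclideanSpace ℝ (Fin n)} (h : γ.Joins x y) :
    qhDist D x y ≤ γ.qhLen 0 γ.len :=
  csInf_le (qhDist_bddBelow D x y) ⟨γ, h, rfl⟩

end AuxLemmas
section AuxLemmas2

open Real

variable {n : ℕ}

/-- `∫ t in a..b, (ρ + t)⁻¹ = log ((ρ+b)/(ρ+a))` for `0 < ρ + a`, `a ≤ b`. -/
lemma integral_inv_add {ρ a b : ℝ} (ha : 0 < ρ + a) (hab : a ≤ b) :
    ∫ t in a..b, (ρ + t)⁻¹ = Real.log ((ρ + b) / (ρ + a)) := by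
  have h1 : ∀ t : ℝ, (ρ + t)⁻¹ = (fun x : ℝ => x⁻¹) (t + ρ) := by
    intro t; simp [add_comm]
  calc ∫ t in a..b, (ρ + t)⁻¹ = ∫ t in a..b, (fun x : ℝ => x⁻¹) (t + ρ) := by
        simp_rw [h1]
    _ = ∫ x in a + ρ..b + ρ, x⁻¹ := intervalIntegral.integral_comp_add_right _ ρ
    _ = Real.log ((b + ρ) / (a + ρ)) :=
        integral_inv_of_pos (by linarith) (by linarith)
    _ = Real.log ((ρ + b) / (ρ + a)) := by rw [add_comm b ρ, add_comm a ρ]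

namespace Arc

variable {D : Set (EuclideanSpace ℝ (Fin n))}

/-- The subarc of `γ` from parameter `s` to `t`. -/
def subarc (γ : Arc n D) {s t : ℝ} (hs : s ∈ Icc 0 γ.len) (ht : t ∈ Icc 0 γ.len)
    (hst : s ≤ t) : Arc n D where
  len := t - s
  len_nonneg := by linarith
  toFun := fun u => γ.toFun (u + s)
  injOn := by
    intro u hu v hv huv
    have h1 : u + s ∈ Icc 0 γ.len := ⟨by linarith [hu.1, hs.1], by linarith [hu.2, ht.2]⟩
    have h2 : v + s ∈ Icc 0 γ.len := ⟨by linarith [hv.1, hs.1], by linarith [hv.2, ht.2]⟩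
    have := γ.injOn h1 h2 huv
    linarith [this]
  mem := by
    intro u hu
    exact γ.mem _ ⟨by linarith [hu.1, hs.1], by linarith [hu.2, ht.2]⟩
  unitSpeed := by
    intro u hu v hv huv
    have heq : (fun w => γ.toFun (w + s)) = γ.toFun ∘ (fun w : ℝ => w + s) := rfl
    have hmono : MonotoneOn (fun w : ℝ => w + s) (Icc u v) :=
      fun x _ y _ hxy => by show x + s ≤ y + s; linarith
    rw [heq, eVariationOn.comp_eq_of_monotoneOn _ _ hmono]
    have himg : (fun w : ℝ => w + s) '' Icc u v = Icc (u + s) (v + s) := by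
      rw [Set.image_add_const_Icc]
    rw [himg, γ.unitSpeed (u + s) ⟨by linarith [hu.1, hs.1], by linarith [hu.2, ht.2]⟩
      (v + s) ⟨by linarith [hv.1, hs.1], by linarith [hv.2, ht.2]⟩ (by linarith)]
    congr 1
    ring

lemma subarc_joins (γ : Arc n D) {s t : ℝ} (hs : s ∈ Icc 0 γ.len) (ht : t ∈ Icc 0 γ.len)
    (hst : s ≤ t) : (γ.subarc hs ht hst).Joins (γ.toFun s) (γ.toFun t) := by
  constructor
  · show γ.toFun (0 + s) = γ.toFun s
    rw [zero_add]
  · show γ.toFun (t - s + s) = γ.toFun t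
    rw [sub_add_cancel]

lemma subarc_qhLen (γ : Arc n D) {s t : ℝ} (hs : s ∈ Icc 0 γ.len) (ht : t ∈ Icc 0 γ.len)
    (hst : s ≤ t) :
    (γ.subarc hs ht hst).qhLen 0 (γ.subarc hs ht hst).len = γ.qhLen s t := by
  show (∫ u in (0:ℝ)..(t - s), 1 / distBd D (γ.toFun (u + s))) = _
  have := intervalIntegral.integral_comp_add_right
    (a := (0:ℝ)) (b := t - s) (fun v => 1 / distBd D (γ.toFun v)) s
  rw [this, zero_add, sub_add_cancel]
  rfl

lemma qhDist_le_qhLen_subarc (γ : Arc n D) {s t : ℝ} (hs : s ∈ Icc 0 γ.len)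
    (ht : t ∈ Icc 0 γ.len) (hst : s ≤ t) :
    qhDist D (γ.toFun s) (γ.toFun t) ≤ γ.qhLen s t := by
  have h := qhDist_le_qhLen (γ.subarc hs ht hst) (γ.subarc_joins hs ht hst)
  rwa [γ.subarc_qhLen hs ht hst] at h

end Arc

end AuxLemmas2
section AuxLemmas3

open Real

variable {n : ℕ}

/-- Along any arc, the distance to the boundary grows at most linearly from either endpoint,
so the quasihyperbolic length is at least `log(1 + len/d)`; this gives the standard lower
bound for the quasihyperbolic distance, in exponential form, with either endpoint. -/
lemma dist_le_exp_qhDist {D' : Set (EuclideanSpace ℝ (Fin n))} (hD' : IsOpen D')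
    (hne : D' ≠ univ) {x y : EuclideanSpace ℝ (Fin n)} (hx : x ∈ D') (hy : y ∈ D')
    (hjoin : ∃ γ : Arc n D', γ.Joins x y) :
    dist x y ≤ (Real.exp (qhDist D' x y) - 1) * distBd D' x ∧
    dist x y ≤ (Real.exp (qhDist D' x y) - 1) * distBd D' y := by
  set ρ := distBd D' x with hρdef
  set σ := distBd D' y with hσdef
  have hρ : 0 < ρ := distBd_pos hD' hne hx
  have hσ : 0 < σ := distBd_pos hD' hne hy
  set Δ := dist x y with hΔdef
  have hΔ0 : 0 ≤ Δ := dist_nonneg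
  -- every arc joining x to y has qhLen at least log((ρ+Δ)/ρ) and log((σ+Δ)/σ)
  have key : ∀ r ∈ { r | ∃ γ : Arc n D', γ.Joins x y ∧ r = γ.qhLen 0 γ.len },
      Real.log ((ρ + Δ) / ρ) ≤ r ∧ Real.log ((σ + Δ) / σ) ≤ r := by
    rintro r ⟨γ, ⟨h0, hL⟩, rfl⟩
    set L := γ.len with hLdef
    have hL0 : 0 ≤ L := γ.len_nonneg
    have h0mem : (0:ℝ) ∈ Icc 0 L := ⟨le_refl 0, hL0⟩
    have hLmem : L ∈ Icc 0 L := ⟨hL0, le_refl L⟩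
    have hΔL : Δ ≤ L := by
      have := γ.dist_le h0mem hLmem hL0
      rw [h0, hL] at this
      linarith
    have hint := γ.integrand_intervalIntegrable hD' hne h0mem hLmem
    constructor
    · -- compare with (ρ + t)⁻¹
      have hmono : ∀ t ∈ Icc (0:ℝ) L, (ρ + t)⁻¹ ≤ 1 / distBd D' (γ.toFun t) := by
        intro t htm
        have hpos : 0 < distBd D' (γ.toFun t) := distBd_pos hD' hne (γ.mem t htm)
        have hub : distBd D' (γ.toFun t) ≤ ρ + t := by
          have h1 : distBd D' (γ.toFun t) ≤ distBd D' x + dist (γ.toFun t) x :=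
            distBd_le_add D' _ _
          have h2 : dist (γ.toFun t) x ≤ t := by
            have := γ.dist_le h0mem htm htm.1
            rw [h0, dist_comm] at this
            linarith
          linarith
        rw [one_div]
        exact inv_anti₀ hpos hub
      have hcmp : (∫ t in (0:ℝ)..L, (ρ + t)⁻¹) ≤ γ.qhLen 0 L := by
        apply intervalIntegral.integral_mono_on hL0 _ hint hmono
        apply ContinuousOn.intervalIntegrable
        apply ContinuousOn.inv₀ (by fun_prop)
        intro t htm
        rw [uIcc_of_le hL0] at htm
        nlinarith [htm.1]
      have hcalc : (∫ t in (0:ℝ)..L, (ρ + t)⁻¹) = Real.log ((ρ + L) / ρ) := by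
        rw [integral_inv_add (by linarith) hL0, add_zero]
      rw [hcalc] at hcmp
      refine le_trans ?_ hcmp
      apply Real.log_le_log (by positivity)
      gcongr
    · -- compare with (σ + (L - t))⁻¹
      have hmono : ∀ t ∈ Icc (0:ℝ) L, (σ + (L - t))⁻¹ ≤ 1 / distBd D' (γ.toFun t) := by
        intro t htm
        have hpos : 0 < distBd D' (γ.toFun t) := distBd_pos hD' hne (γ.mem t htm)
        have hub : distBd D' (γ.toFun t) ≤ σ + (L - t) := by
          have h1 : distBd D' (γ.toFun t) ≤ distBd D' y + dist (γ.toFun t) y :=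
            distBd_le_add D' _ _
          have h2 : dist (γ.toFun t) y ≤ L - t := by
            have := γ.dist_le htm hLmem htm.2
            rw [hL] at this
            linarith
          linarith
        rw [one_div]
        exact inv_anti₀ hpos hub
      have hcmp : (∫ t in (0:ℝ)..L, (σ + (L - t))⁻¹) ≤ γ.qhLen 0 L := by
        apply intervalIntegral.integral_mono_on hL0 _ hint hmono
        apply ContinuousOn.intervalIntegrable
        apply ContinuousOn.inv₀ (by fun_prop)
        intro t htm
        rw [uIcc_of_le hL0] at htm
        nlinarith [htm.2]
      have hcalc : (∫ t in (0:ℝ)..L, (σ + (L - t))⁻¹) = Real.log ((σ + L) / σ) := by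
        have h := intervalIntegral.integral_comp_sub_left (a := (0:ℝ)) (b := L)
          (fun v : ℝ => (σ + v)⁻¹) L
        beta_reduce at h
        rw [h, sub_self, sub_zero, integral_inv_add (by linarith) hL0, add_zero]
      rw [hcalc] at hcmp
      refine le_trans ?_ hcmp
      apply Real.log_le_log (by positivity)
      gcongr
  have hne' : { r | ∃ γ : Arc n D', γ.Joins x y ∧ r = γ.qhLen 0 γ.len }.Nonempty := by
    obtain ⟨γ, hj⟩ := hjoin
    exact ⟨γ.qhLen 0 γ.len, γ, hj, rfl⟩
  have hlow1 : Real.log ((ρ + Δ) / ρ) ≤ qhDist D' x y :=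
    le_csInf hne' (fun r hr => (key r hr).1)
  have hlow2 : Real.log ((σ + Δ) / σ) ≤ qhDist D' x y :=
    le_csInf hne' (fun r hr => (key r hr).2)
  constructor
  · have := Real.exp_le_exp.2 hlow1
    rw [Real.exp_log (by positivity)] at this
    rw [div_le_iff₀ hρ] at this
    nlinarith [this]
  · have := Real.exp_le_exp.2 hlow2
    rw [Real.exp_log (by positivity)] at this
    rw [div_le_iff₀ hσ] at this
    nlinarith [this]

end AuxLemmas3
section AuxLemmas4

open Real

variable {n : ℕ}

lemma log_one_add_le_sqrt {x : ℝ} (hx : 0 ≤ x) : Real.log (1 + x) ≤ Real.sqrt x := by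
  set y := Real.sqrt x with hy
  have hy0 : 0 ≤ y := Real.sqrt_nonneg x
  have hx' : y ^ 2 = x := Real.sq_sqrt hx
  have h4 := Real.sum_le_exp_of_nonneg hy0 4
  have hsum : 1 + y + y ^ 2 / 2 + y ^ 3 / 6 ≤ Real.exp y := by
    have heq : ∑ i ∈ Finset.range 4, y ^ i / (Nat.factorial i) = 1 + y + y ^ 2 / 2 + y ^ 3 / 6 := by
      norm_num [Finset.sum_range_succ, Nat.factorial]
    rw [heq] at h4
    exact h4
  have h1 : 1 + x ≤ Real.exp y := by
    nlinarith [mul_nonneg hy0 (sq_nonneg (y - 3/2)), hy0]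
  calc Real.log (1 + x) ≤ Real.log (Real.exp y) := Real.log_le_log (by linarith) h1
    _ = y := Real.log_exp y

set_option maxHeartbeats 1000000 in
/-- The Gehring–Osgood type upper bound for the quasihyperbolic distance in a
`c`-uniform domain. -/
lemma qhDist_le_of_uniform {D' : Set (EuclideanSpace ℝ (Fin n))} (hD' : IsOpen D')
    (hne : D' ≠ univ) {c : ℝ} (hc : 1 ≤ c) (hu : IsUniform D' c)
    {x y : EuclideanSpace ℝ (Fin n)} (hx : x ∈ D') (hy : y ∈ D')
    {m0 : ℝ} (hm0 : 0 < m0) (hmx : m0 ≤ distBd D' x) (hmy : m0 ≤ distBd D' y) :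
    qhDist D' x y ≤ 6 * c * Real.log (1 + c * dist x y / m0) := by
  obtain ⟨γ, hj, hcone, hlen⟩ := hu x hx y hy
  set ρ := distBd D' x with hρdef
  set σ := distBd D' y with hσdef
  have hρ : 0 < ρ := distBd_pos hD' hne hx
  have hσ : 0 < σ := distBd_pos hD' hne hy
  set Δ := dist x y with hΔdef
  have hΔ0 : 0 ≤ Δ := dist_nonneg
  set L := γ.len with hLdef
  have hL0 : 0 ≤ L := γ.len_nonneg
  have hLΔ : L ≤ c * Δ := hlen
  have h0mem : (0:ℝ) ∈ Icc 0 L := ⟨le_refl 0, hL0⟩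
  have hLmem : L ∈ Icc 0 L := ⟨hL0, le_refl L⟩
  have hhalf : L / 2 ∈ Icc 0 L := ⟨by linarith, by linarith⟩
  have hq0 : 0 ≤ c * Δ / m0 := by positivity
  have hqm : c * Δ / m0 * m0 = c * Δ := div_mul_cancel₀ _ hm0.ne'
  have key : qhDist D' x y ≤ γ.qhLen 0 L := qhDist_le_qhLen γ hj
  have hsplit : γ.qhLen 0 L = γ.qhLen 0 (L/2) + γ.qhLen (L/2) L :=
    (γ.qhLen_add hD' hne h0mem hhalf hLmem).symm
  -- first half
  have hhalf1 : γ.qhLen 0 (L/2) ≤ 3 * c * Real.log (1 + c * Δ / m0) := by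
    have hmono : ∀ t ∈ Icc (0:ℝ) (L/2),
        1 / distBd D' (γ.toFun t) ≤ 3 * c * (ρ + t)⁻¹ := by
      intro t htm
      have htm' : t ∈ Icc 0 L := ⟨htm.1, by linarith [htm.2]⟩
      have hpos : 0 < distBd D' (γ.toFun t) := distBd_pos hD' hne (γ.mem t htm')
      have hpt : 0 < ρ + t := by linarith [htm.1]
      have hlip : ρ - t ≤ distBd D' (γ.toFun t) := by
        have h1 : ρ ≤ distBd D' (γ.toFun t) + dist x (γ.toFun t) :=
          distBd_le_add D' x (γ.toFun t)
        have h2 : dist x (γ.toFun t) ≤ t := by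
          have h3 := γ.dist_le h0mem htm' htm'.1
          rw [hj.1] at h3
          linarith
        linarith
      have hcone' : t ≤ c * distBd D' (γ.toFun t) := by
        have h5 := hcone t htm'
        rwa [min_eq_left (by linarith [htm.2])] at h5
      have hkey : ρ + t ≤ 3 * c * distBd D' (γ.toFun t) := by
        rcases le_total t (ρ / 2) with h | h
        · nlinarith
        · nlinarith
      have h6 : 1 / distBd D' (γ.toFun t) ≤ (3 * c) / (ρ + t) := by
        rw [div_le_div_iff₀ hpos hpt]
        linarith
      rwa [div_eq_mul_inv (3 * c)] at h6
    have hint1 : IntervalIntegrable (fun t => 1 / distBd D' (γ.toFun t)) volume 0 (L/2) :=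
      γ.integrand_intervalIntegrable hD' hne h0mem hhalf
    have hint2 : IntervalIntegrable (fun t => 3 * c * (ρ + t)⁻¹) volume 0 (L/2) := by
      apply ContinuousOn.intervalIntegrable
      apply ContinuousOn.mul continuousOn_const
      apply ContinuousOn.inv₀ (by fun_prop)
      intro t htm
      rw [uIcc_of_le (by linarith : (0:ℝ) ≤ L/2)] at htm
      nlinarith [htm.1]
    have hcmp : γ.qhLen 0 (L/2) ≤ ∫ t in (0:ℝ)..(L/2), 3 * c * (ρ + t)⁻¹ :=
      intervalIntegral.integral_mono_on (by linarith) hint1 hint2 hmono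
    have hcalc : (∫ t in (0:ℝ)..(L/2), 3 * c * (ρ + t)⁻¹)
        = 3 * c * Real.log ((ρ + L/2) / (ρ + 0)) := by
      rw [intervalIntegral.integral_const_mul, integral_inv_add (by linarith) (by linarith)]
    have hlog : Real.log ((ρ + L/2) / (ρ + 0)) ≤ Real.log (1 + c * Δ / m0) := by
      apply Real.log_le_log (by rw [add_zero]; positivity)
      rw [add_zero, div_le_iff₀ hρ]
      nlinarith
    calc γ.qhLen 0 (L/2) ≤ ∫ t in (0:ℝ)..(L/2), 3 * c * (ρ + t)⁻¹ := hcmp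
      _ = 3 * c * Real.log ((ρ + L/2) / (ρ + 0)) := hcalc
      _ ≤ 3 * c * Real.log (1 + c * Δ / m0) := by nlinarith [hlog]
  -- second half
  have hhalf2 : γ.qhLen (L/2) L ≤ 3 * c * Real.log (1 + c * Δ / m0) := by
    have hmono : ∀ t ∈ Icc (L/2) L,
        1 / distBd D' (γ.toFun t) ≤ 3 * c * (σ + (L - t))⁻¹ := by
      intro t htm
      have htm' : t ∈ Icc 0 L := ⟨by linarith [htm.1], htm.2⟩
      have hpos : 0 < distBd D' (γ.toFun t) := distBd_pos hD' hne (γ.mem t htm')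
      have hpt : 0 < σ + (L - t) := by linarith [htm.2]
      have hlip : σ - (L - t) ≤ distBd D' (γ.toFun t) := by
        have h1 : σ ≤ distBd D' (γ.toFun t) + dist y (γ.toFun t) :=
          distBd_le_add D' y (γ.toFun t)
        have h2 : dist y (γ.toFun t) ≤ L - t := by
          have h3 := γ.dist_le htm' hLmem htm'.2
          rw [hj.2] at h3
          rw [dist_comm y (γ.toFun t)]
          linarith
        linarith
      have hcone' : L - t ≤ c * distBd D' (γ.toFun t) := by
        have h5 := hcone t htm'
        rwa [min_eq_right (by linarith [htm.1])] at h5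
      have hkey : σ + (L - t) ≤ 3 * c * distBd D' (γ.toFun t) := by
        rcases le_total (L - t) (σ / 2) with h | h
        · nlinarith
        · nlinarith
      have h6 : 1 / distBd D' (γ.toFun t) ≤ (3 * c) / (σ + (L - t)) := by
        rw [div_le_div_iff₀ hpos hpt]
        linarith
      rwa [div_eq_mul_inv (3 * c)] at h6
    have hint1 : IntervalIntegrable (fun t => 1 / distBd D' (γ.toFun t)) volume (L/2) L :=
      γ.integrand_intervalIntegrable hD' hne hhalf hLmem
    have hint2 : IntervalIntegrable (fun t => 3 * c * (σ + (L - t))⁻¹) volume (L/2) L := by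
      apply ContinuousOn.intervalIntegrable
      apply ContinuousOn.mul continuousOn_const
      apply ContinuousOn.inv₀ (by fun_prop)
      intro t htm
      rw [uIcc_of_le (by linarith : L/2 ≤ L)] at htm
      nlinarith [htm.2]
    have hcmp : γ.qhLen (L/2) L ≤ ∫ t in (L/2)..L, 3 * c * (σ + (L - t))⁻¹ :=
      intervalIntegral.integral_mono_on (by linarith) hint1 hint2 hmono
    have hcalc : (∫ t in (L/2)..L, (σ + (L - t))⁻¹) = Real.log ((σ + L/2) / (σ + 0)) := by
      have h := intervalIntegral.integral_comp_sub_left (a := L/2) (b := L)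
        (fun v : ℝ => (σ + v)⁻¹) L
      beta_reduce at h
      rw [h, sub_self]
      have h2 : L - L/2 = L/2 := by ring
      rw [h2, integral_inv_add (by linarith) (by linarith)]
    have hlog : Real.log ((σ + L/2) / (σ + 0)) ≤ Real.log (1 + c * Δ / m0) := by
      apply Real.log_le_log (by rw [add_zero]; positivity)
      rw [add_zero, div_le_iff₀ hσ]
      nlinarith
    calc γ.qhLen (L/2) L ≤ ∫ t in (L/2)..L, 3 * c * (σ + (L - t))⁻¹ := hcmp
      _ = 3 * c * Real.log ((σ + L/2) / (σ + 0)) := by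
          rw [intervalIntegral.integral_const_mul, hcalc]
      _ ≤ 3 * c * Real.log (1 + c * Δ / m0) := by nlinarith [hlog]
  calc qhDist D' x y ≤ γ.qhLen 0 L := key
    _ = γ.qhLen 0 (L/2) + γ.qhLen (L/2) L := hsplit
    _ ≤ 6 * c * Real.log (1 + c * Δ / m0) := by linarith

end AuxLemmas4
section AuxLemmas5

open Real

/-- Chain decomposition: if the quasihyperbolic length of `β` between parameters `s ≤ t`
is at most `N+1`, then the images of the endpoints under the CQH map are at distance at
most `(N+1)·e^{M+C}·m`, where `m` bounds the boundary distance of image points. -/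
lemma chain_bound {n : ℕ} {D D' : Set (EuclideanSpace ℝ (Fin n))}
    {f : EuclideanSpace ℝ (Fin n) → EuclideanSpace ℝ (Fin n)} {M C m : ℝ}
    (hDo : IsOpen D) (hDne : D ≠ univ) (hD'o : IsOpen D') (hD'ne : D' ≠ univ)
    (hM : 1 ≤ M) (hC : 0 ≤ C) (hm : 0 ≤ m)
    (β : Arc n D) {tp tq : ℝ} (htp : tp ∈ Icc 0 β.len) (htq : tq ∈ Icc 0 β.len)
    (hmemD' : ∀ u ∈ Icc 0 β.len, f (β.toFun u) ∈ D')
    (hjoin' : ∀ x ∈ D', ∀ y ∈ D', ∃ γ : Arc n D', γ.Joins x y)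
    (hub : ∀ s t : ℝ, tp ≤ s → s ≤ t → t ≤ tq →
      qhDist D' (f (β.toFun s)) (f (β.toFun t)) ≤ M * β.qhLen s t + C)
    (hbd : ∀ u : ℝ, tp ≤ u → u ≤ tq → distBd D' (f (β.toFun u)) ≤ m) :
    ∀ N : ℕ, ∀ s t : ℝ, tp ≤ s → s ≤ t → t ≤ tq → β.qhLen s t ≤ N + 1 →
      dist (f (β.toFun s)) (f (β.toFun t)) ≤ (N + 1) * Real.exp (M + C) * m := by
  have hmemIcc : ∀ u : ℝ, tp ≤ u → u ≤ tq → u ∈ Icc 0 β.len :=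
    fun u h1 h2 => ⟨htp.1.trans h1, h2.trans htq.2⟩
  -- one step of length at most 1
  have step : ∀ s t : ℝ, tp ≤ s → s ≤ t → t ≤ tq → β.qhLen s t ≤ 1 →
      dist (f (β.toFun s)) (f (β.toFun t)) ≤ Real.exp (M + C) * m := by
    intro s t h1 h2 h3 h4
    have hs : s ∈ Icc 0 β.len := hmemIcc s h1 (h2.trans h3)
    have ht : t ∈ Icc 0 β.len := hmemIcc t (h1.trans h2) h3
    have hψ0 : 0 ≤ qhDist D' (f (β.toFun s)) (f (β.toFun t)) := qhDist_nonneg _ _ _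
    have hψ : qhDist D' (f (β.toFun s)) (f (β.toFun t)) ≤ M + C := by
      have h5 := hub s t h1 h2 h3
      have h6 : 0 ≤ β.qhLen s t := β.qhLen_nonneg h2
      nlinarith
    have hlow := (dist_le_exp_qhDist hD'o hD'ne (hmemD' s hs) (hmemD' t ht)
      (hjoin' _ (hmemD' s hs) _ (hmemD' t ht))).1
    have hexp : Real.exp (qhDist D' (f (β.toFun s)) (f (β.toFun t))) ≤ Real.exp (M + C) :=
      Real.exp_le_exp.2 hψ
    have hd0 : 0 ≤ distBd D' (f (β.toFun s)) := distBd_nonneg _ _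
    have hdm : distBd D' (f (β.toFun s)) ≤ m := hbd s h1 (h2.trans h3)
    have h1exp : 1 ≤ Real.exp (qhDist D' (f (β.toFun s)) (f (β.toFun t))) :=
      Real.one_le_exp hψ0
    nlinarith [hlow]
  intro N
  induction N with
  | zero =>
    intro s t h1 h2 h3 h4
    have := step s t h1 h2 h3 (by push_cast at h4; linarith)
    push_cast
    linarith
  | succ k ih =>
    intro s t h1 h2 h3 h4
    by_cases hc1 : β.qhLen s t ≤ 1
    · have := step s t h1 h2 h3 hc1
      have hE : 0 < Real.exp (M + C) := Real.exp_pos _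
      push_cast
      nlinarith [this, mul_nonneg (mul_nonneg (show (0:ℝ) ≤ (k:ℝ) + 1 by positivity) hE.le) hm]
    · push_neg at hc1
      have hs : s ∈ Icc 0 β.len := hmemIcc s h1 (h2.trans h3)
      have ht : t ∈ Icc 0 β.len := hmemIcc t (h1.trans h2) h3
      -- find u with qhLen s u = 1 by the intermediate value theorem
      have hcont : ContinuousOn (fun u => β.qhLen s u) (Icc s t) := by
        have := intervalIntegral.continuousOn_primitive_interval'
          (β.integrand_intervalIntegrable hDo hDne hs ht) (left_mem_uIcc (a := s) (b := t))
        rwa [uIcc_of_le h2] at this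
      have hgs : β.qhLen s s = 0 := intervalIntegral.integral_same
      have hivt := intermediate_value_Icc h2 hcont
      have h1mem : (1:ℝ) ∈ Icc (β.qhLen s s) (β.qhLen s t) := by
        rw [hgs]; exact ⟨zero_le_one, hc1.le⟩
      obtain ⟨u, humem, hgu0⟩ := hivt h1mem
      have hgu : β.qhLen s u = 1 := hgu0
      have humem' : u ∈ Icc 0 β.len := hmemIcc u (h1.trans humem.1) (humem.2.trans h3)
      have hadd := β.qhLen_add hDo hDne hs humem' ht
      have hut : β.qhLen u t ≤ (k : ℝ) + 1 := by
        push_cast at h4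
        rw [← hadd] at h4
        rw [hgu] at h4
        linarith
      have hih := ih u t (h1.trans humem.1) humem.2 h3 hut
      have hstep := step s u h1 humem.1 (humem.2.trans h3) (le_of_eq hgu)
      have htri := dist_triangle (f (β.toFun s)) (f (β.toFun u)) (f (β.toFun t))
      have hE : 0 < Real.exp (M + C) := Real.exp_pos _
      push_cast at hih ⊢
      nlinarith
end AuxLemmas5

set_option maxHeartbeats 4000000 in
/-- **Corollary 3.9.** Let `D ⊊ ℝⁿ` (`n ≥ 2`) be a domain, `D' ⊊ ℝⁿ` a `c`-uniform domain,
and `f : D → D'` an `(M,C)`-CQH homeomorphism.  Let `β` be an arc in `D` satisfying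
`ℓ_k(β[s₁,s₂]) ≤ 4a²·k_D(s₁,s₂) + 4a²` for all `s₁, s₂ ∈ β`, let `p = β(tp)`, `q = β(tq)`
with `tp ≤ tq`, and let `w = β(tw) ∈ β[p,q]` maximize `d'(f ·)` over `β`, with
`d'(f p) ≥ d'(f w)/2` and `d'(f q) ≥ d'(f w)/2`.  Then there is `a₂ > 0`, depending only on
`a, c, M, C`, bounding the stated quantities. -/
theorem corollary_3_9
    (a c M C : ℝ) (ha : 1 ≤ a) (hc : 1 ≤ c) (hM : 1 ≤ M) (hC : 0 ≤ C) :
    ∃ a₂ > 0, ∀ (n : ℕ), 2 ≤ n →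
      ∀ (D D' : Set (EuclideanSpace ℝ (Fin n)))
        (f : EuclideanSpace ℝ (Fin n) → EuclideanSpace ℝ (Fin n)),
        IsProperDomain D → IsProperDomain D' → IsUniform D' c →
        IsCQH D D' f M C →
        ∀ (β : Arc n D),
          (∀ s ∈ Icc (0:ℝ) β.len, ∀ t ∈ Icc (0:ℝ) β.len, s ≤ t →
            β.qhLen s t ≤ 4 * a ^ 2 * qhDist D (β.toFun s) (β.toFun t) + 4 * a ^ 2) →
          ∀ tp ∈ Icc (0:ℝ) β.len, ∀ tq ∈ Icc (0:ℝ) β.len, tp ≤ tq →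
            ∀ tw ∈ Icc tp tq,
              (∀ u ∈ Icc (0:ℝ) β.len,
                distBd D' (f (β.toFun u)) ≤ distBd D' (f (β.toFun tw))) →
              distBd D' (f (β.toFun tw)) / 2 ≤ distBd D' (f (β.toFun tp)) →
              distBd D' (f (β.toFun tw)) / 2 ≤ distBd D' (f (β.toFun tq)) →
              ∀ t ∈ Icc tp tq,
                distBd D' (f (β.toFun tw)) ≤ a₂ * distBd D' (f (β.toFun t)) ∧
                dist (f (β.toFun tp)) (f (β.toFun tq)) ≤ a₂ * distBd D' (f (β.toFun t)) ∧
                max (dist (f (β.toFun tp)) (f (β.toFun t)))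
                    (dist (f (β.toFun tq)) (f (β.toFun t)))
                  ≤ a₂ * distBd D' (f (β.toFun t)) := by
  have ha2 : (0:ℝ) < a ^ 2 := by positivity
  set E := Real.exp (M + C) with hEdef
  have hE : 0 < E := Real.exp_pos _
  set P := 24 * a ^ 2 * M * c * Real.sqrt (2 * c * E) with hPdef
  set Q := 4 * a ^ 2 * C + 4 * a ^ 2 + 2 with hQdef
  have hP : 0 ≤ P := by positivity
  have hQ : 2 ≤ Q := by nlinarith
  set Φ₁ := (P + Q) ^ 2 with hΦ₁def
  have hΦ₁0 : 0 ≤ Φ₁ := sq_nonneg _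
  set Ψ := M * Φ₁ + C with hΨdef
  have hΨ0 : 0 ≤ Ψ := by nlinarith
  refine ⟨2 * Real.exp Ψ, by positivity, ?_⟩
  intro n hn D D' f hD hD' hunif hcqh β hβ tp htp tq htq htpq tw htw hmax hp hq t ht
  obtain ⟨hDo, hDconn, hDne⟩ := hD
  obtain ⟨hD'o, hD'conn, hD'ne⟩ := hD'
  obtain ⟨hfc, hbij, hineq⟩ := hcqh
  have hsubIcc : Icc tp tq ⊆ Icc 0 β.len := Icc_subset_Icc htp.1 htq.2
  have hmemD' : ∀ u ∈ Icc (0:ℝ) β.len, f (β.toFun u) ∈ D' :=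
    fun u hu => hbij.mapsTo (β.mem u hu)
  have hjoin' : ∀ x ∈ D', ∀ y ∈ D', ∃ γ : Arc n D', γ.Joins x y := by
    intro x hx y hy
    obtain ⟨γ, hj, -, -⟩ := hunif x hx y hy
    exact ⟨γ, hj⟩
  set m := distBd D' (f (β.toFun tw)) with hmdef
  have htwIcc : tw ∈ Icc 0 β.len := hsubIcc htw
  have hm : 0 < m := distBd_pos hD'o hD'ne (hmemD' tw htwIcc)
  -- upper bound on image qh distances via the quasigeodesic property
  have hub : ∀ s t' : ℝ, tp ≤ s → s ≤ t' → t' ≤ tq →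
      qhDist D' (f (β.toFun s)) (f (β.toFun t')) ≤ M * β.qhLen s t' + C := by
    intro s t' h1 h2 h3
    have hs : s ∈ Icc 0 β.len := hsubIcc ⟨h1, h2.trans h3⟩
    have ht' : t' ∈ Icc 0 β.len := hsubIcc ⟨h1.trans h2, h3⟩
    have h4 := (hineq _ (β.mem s hs) _ (β.mem t' ht')).2
    have h5 : qhDist D (β.toFun s) (β.toFun t') ≤ β.qhLen s t' :=
      β.qhDist_le_qhLen_subarc hs ht' h2
    nlinarith
  have hbd : ∀ u : ℝ, tp ≤ u → u ≤ tq → distBd D' (f (β.toFun u)) ≤ m :=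
    fun u h1 h2 => hmax u (hsubIcc ⟨h1, h2⟩)
  set Φ := β.qhLen tp tq with hΦdef
  have hΦ0 : 0 ≤ Φ := β.qhLen_nonneg htpq
  set N := Nat.ceil Φ with hNdef
  have hΦN : Φ ≤ (N:ℝ) := Nat.le_ceil Φ
  have hNΦ : (N : ℝ) ≤ Φ + 1 := (Nat.ceil_lt_add_one hΦ0).le
  have hpq : dist (f (β.toFun tp)) (f (β.toFun tq)) ≤ ((N:ℝ) + 1) * E * m := by
    apply chain_bound hDo hDne hD'o hD'ne hM hC hm.le β htp htq hmemD' hjoin' hub hbd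
      N tp tq le_rfl htpq le_rfl (by linarith)
  -- Gehring-Osgood upper bound between the two endpoints
  have hψpq : qhDist D' (f (β.toFun tp)) (f (β.toFun tq)) ≤
      6 * c * Real.log (1 + c * dist (f (β.toFun tp)) (f (β.toFun tq)) / (m / 2)) :=
    qhDist_le_of_uniform hD'o hD'ne hc hunif (hmemD' tp htp) (hmemD' tq htq)
      (by linarith) hp hq
  -- quasigeodesic property at the endpoints
  have hΦle : Φ ≤ 4 * a ^ 2 *
      (M * qhDist D' (f (β.toFun tp)) (f (β.toFun tq)) + C) + 4 * a ^ 2 := by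
    have h1 := hβ tp htp tq htq htpq
    have h2 := (hineq _ (β.mem tp htp) _ (β.mem tq htq)).1
    have h3 : qhDist D (β.toFun tp) (β.toFun tq) ≤
        M * qhDist D' (f (β.toFun tp)) (f (β.toFun tq)) + C := by
      rw [div_le_iff₀ (by linarith : (0:ℝ) < M)] at h2
      nlinarith
    nlinarith
  -- assemble the self-improving inequality
  have hdistpq : dist (f (β.toFun tp)) (f (β.toFun tq)) ≤ (Φ + 2) * E * m := by
    calc dist (f (β.toFun tp)) (f (β.toFun tq)) ≤ ((N:ℝ) + 1) * E * m := hpq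
      _ ≤ (Φ + 2) * E * m := by
          apply mul_le_mul_of_nonneg_right _ hm.le
          apply mul_le_mul_of_nonneg_right _ hE.le
          linarith
  have hψval : qhDist D' (f (β.toFun tp)) (f (β.toFun tq)) ≤
      6 * c * (Real.sqrt (2 * c * E) * Real.sqrt (Φ + 2)) := by
    have hd0 : 0 ≤ dist (f (β.toFun tp)) (f (β.toFun tq)) := dist_nonneg
    have harg : c * dist (f (β.toFun tp)) (f (β.toFun tq)) / (m / 2) ≤
        2 * c * E * (Φ + 2) := by
      rw [div_le_iff₀ (by linarith : (0:ℝ) < m / 2)]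
      nlinarith
    have harg0 : 0 ≤ c * dist (f (β.toFun tp)) (f (β.toFun tq)) / (m / 2) := by
      apply div_nonneg (by nlinarith) (by linarith)
    have hlog1 : Real.log (1 + c * dist (f (β.toFun tp)) (f (β.toFun tq)) / (m / 2)) ≤
        Real.log (1 + 2 * c * E * (Φ + 2)) :=
      Real.log_le_log (by linarith) (by linarith)
    have hlog2 : Real.log (1 + 2 * c * E * (Φ + 2)) ≤ Real.sqrt (2 * c * E * (Φ + 2)) :=
      log_one_add_le_sqrt (by nlinarith)
    have hsqeq : Real.sqrt (2 * c * E * (Φ + 2)) =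
        Real.sqrt (2 * c * E) * Real.sqrt (Φ + 2) :=
      Real.sqrt_mul (by positivity) _
    calc qhDist D' (f (β.toFun tp)) (f (β.toFun tq))
        ≤ 6 * c * Real.log (1 + c * dist (f (β.toFun tp)) (f (β.toFun tq)) / (m / 2)) := hψpq
      _ ≤ 6 * c * (Real.sqrt (2 * c * E) * Real.sqrt (Φ + 2)) := by
          rw [← hsqeq]
          have := hlog1.trans hlog2
          nlinarith
  -- Φ ≤ Φ₁
  have hΦΦ₁ : Φ ≤ Φ₁ := by
    set X := Real.sqrt (Φ + 2) with hXdef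
    have hX1 : 1 ≤ X := by
      rw [hXdef, show (1:ℝ) = Real.sqrt 1 by simp]
      exact Real.sqrt_le_sqrt (by linarith)
    have hX2 : X ^ 2 = Φ + 2 := Real.sq_sqrt (by linarith)
    have hψ0 : 0 ≤ qhDist D' (f (β.toFun tp)) (f (β.toFun tq)) := qhDist_nonneg _ _ _
    have hineqX : X ^ 2 ≤ P * X + Q := by
      rw [hX2]
      have h7 : 4 * a ^ 2 * M * qhDist D' (f (β.toFun tp)) (f (β.toFun tq)) ≤
          4 * a ^ 2 * M * (6 * c * (Real.sqrt (2 * c * E) * X)) := by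
        apply mul_le_mul_of_nonneg_left hψval (by positivity)
      rw [hPdef, hQdef]
      nlinarith
    have h8 : X * X ≤ (P + Q) * X := by nlinarith
    have h9 : X ≤ P + Q := le_of_mul_le_mul_right (by nlinarith) (by linarith : (0:ℝ) < X)
    rw [hΦ₁def]
    nlinarith
  -- uniform bound on qh distances between images of points of β[tp,tq]
  have hΨpair : ∀ s t' : ℝ, tp ≤ s → s ≤ t' → t' ≤ tq →
      qhDist D' (f (β.toFun s)) (f (β.toFun t')) ≤ Ψ := by
    intro s t' h1 h2 h3
    have hs : s ∈ Icc 0 β.len := hsubIcc ⟨h1, h2.trans h3⟩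
    have ht' : t' ∈ Icc 0 β.len := hsubIcc ⟨h1.trans h2, h3⟩
    have e1 := β.qhLen_add hDo hDne htp hs ht'
    have e2 := β.qhLen_add hDo hDne htp ht' htq
    have n1 : 0 ≤ β.qhLen tp s := β.qhLen_nonneg h1
    have n2 : 0 ≤ β.qhLen t' tq := β.qhLen_nonneg h3
    have hql : β.qhLen s t' ≤ Φ := by
      rw [hΦdef]
      linarith
    have h5 := hub s t' h1 h2 h3
    have h6 : 0 ≤ β.qhLen s t' := β.qhLen_nonneg h2
    rw [hΨdef]
    nlinarith
  -- conclusions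
  have htIcc : t ∈ Icc 0 β.len := hsubIcc ht
  set h := distBd D' (f (β.toFun t)) with hhdef
  have hh : 0 < h := distBd_pos hD'o hD'ne (hmemD' t htIcc)
  have hexpΨ : 1 ≤ Real.exp Ψ := Real.one_le_exp hΨ0
  -- bound on dist between image of t and image of tw
  have hdzw : dist (f (β.toFun t)) (f (β.toFun tw)) ≤ (Real.exp Ψ - 1) * h := by
    rcases le_total t tw with hcase | hcase
    · have hψ := hΨpair t tw ht.1 hcase htw.2
      have hlow := (dist_le_exp_qhDist hD'o hD'ne (hmemD' t htIcc) (hmemD' tw htwIcc)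
        (hjoin' _ (hmemD' t htIcc) _ (hmemD' tw htwIcc))).1
      have := Real.exp_le_exp.2 hψ
      nlinarith [distBd_nonneg D' (f (β.toFun t)),
        Real.one_le_exp (qhDist_nonneg D' (f (β.toFun t)) (f (β.toFun tw)))]
    · have hψ := hΨpair tw t htw.1 hcase ht.2
      have hlow := (dist_le_exp_qhDist hD'o hD'ne (hmemD' tw htwIcc) (hmemD' t htIcc)
        (hjoin' _ (hmemD' tw htwIcc) _ (hmemD' t htIcc))).2
      rw [dist_comm (f (β.toFun t)) (f (β.toFun tw))]
      have := Real.exp_le_exp.2 hψ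
      nlinarith [distBd_nonneg D' (f (β.toFun t)),
        Real.one_le_exp (qhDist_nonneg D' (f (β.toFun tw)) (f (β.toFun t)))]
  -- (1)
  have hconc1 : m ≤ 2 * Real.exp Ψ * h := by
    have h1 : m ≤ h + dist (f (β.toFun tw)) (f (β.toFun t)) :=
      distBd_le_add D' (f (β.toFun tw)) (f (β.toFun t))
    rw [dist_comm (f (β.toFun tw)) (f (β.toFun t))] at h1
    nlinarith
  -- (3)
  have hconc3a : dist (f (β.toFun tp)) (f (β.toFun t)) ≤ (Real.exp Ψ - 1) * h := by
    have hψ := hΨpair tp t le_rfl ht.1 ht.2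
    have hlow := (dist_le_exp_qhDist hD'o hD'ne (hmemD' tp htp) (hmemD' t htIcc)
      (hjoin' _ (hmemD' tp htp) _ (hmemD' t htIcc))).2
    have := Real.exp_le_exp.2 hψ
    nlinarith [Real.one_le_exp (qhDist_nonneg D' (f (β.toFun tp)) (f (β.toFun t)))]
  have hconc3b : dist (f (β.toFun tq)) (f (β.toFun t)) ≤ (Real.exp Ψ - 1) * h := by
    have hψ := hΨpair t tq ht.1 ht.2 le_rfl
    have hlow := (dist_le_exp_qhDist hD'o hD'ne (hmemD' t htIcc) (hmemD' tq htq)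
      (hjoin' _ (hmemD' t htIcc) _ (hmemD' tq htq))).1
    rw [dist_comm (f (β.toFun tq)) (f (β.toFun t))]
    have hee := Real.exp_le_exp.2 hψ
    have hnn : 0 ≤ Real.exp Ψ - Real.exp (qhDist D' (f (β.toFun t)) (f (β.toFun tq))) := by
      linarith
    nlinarith [mul_nonneg hnn hh.le]
  have hfin : 0 ≤ (Real.exp Ψ + 1) * h := by
    have : 0 ≤ Real.exp Ψ + 1 := by linarith
    exact mul_nonneg this hh.le
  refine ⟨hconc1, ?_, ?_⟩
  · have htri := dist_triangle (f (β.toFun tp)) (f (β.toFun t)) (f (β.toFun tq))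
    have hc3b' : dist (f (β.toFun t)) (f (β.toFun tq)) ≤ (Real.exp Ψ - 1) * h := by
      rw [dist_comm (f (β.toFun t)) (f (β.toFun tq))]
      exact hconc3b
    nlinarith [hh.le]
  · apply max_le
    · nlinarith [hfin]
    · nlinarith [hfin]
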